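/- Let C be a [k, r_1, r_2, h_1, h_2, δ] hierarchical data-local MRC with middle-group supports A_i. Then for each i, the punctured code C|_{A_i} is an [r_1, r_2, h_2, δ] data-local maximally recoverable code. -/

import Mathlib

open Module

/-- The linear map restricting a word of length `n` to the coordinates in `E`
(puncturing on the complement of `E`). -/
def punctureTo (F : Type*) [Field F] {n : ℕ} (E : Finset (Fin n)) :
    (Fin n → F) →ₗ[F] (E → F) :=
  LinearMap.funLeft F F (fun j => (j : Fin n))

/-- A `[k, r₁, r₂, h₁, h₂, δ]` hierarchical data-local maximally recoverable code, with
`t₁ = k/r₁` middle groups `A i` of size `n₁ = r₁ + h₂ + t₂δ` and `t₂ = r₁/r₂` local groups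
`B i s ⊆ A i` of size `n₂ = r₂ + δ` each, length `n = k + h₁ + t₁(h₂ + t₂δ)`:
the code has dimension `k`, each local group carries `δ` local parities
(`dim C|_{B i s} ≤ r₂`), each middle group carries `h₂` further mid-level parities
(`dim C|_{A i} ≤ r₁`), and for every `E ⊆ [n]` of size `k + h₁` meeting each local group
in at most `r₂` coordinates and each middle group in exactly `r₁` coordinates, the
punctured code `C|_E` is a `[k+h₁, k, h₁+1]` MDS code. -/
structure IsHDLMRC (F : Type*) [Field F] [DecidableEq F]
    (k r1 r2 h1 h2 δ t1 t2 n : ℕ) where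
  C : Submodule F (Fin n → F)
  A : Fin t1 → Finset (Fin n)
  B : Fin t1 → Fin t2 → Finset (Fin n)
  hk : k = t1 * r1
  hr1 : r1 = t2 * r2
  hn : n = k + h1 + t1 * (h2 + t2 * δ)
  hA_card : ∀ i, (A i).card = r1 + h2 + t2 * δ
  hA_disj : ∀ i j, i ≠ j → Disjoint (A i) (A j)
  hB_sub : ∀ i s, B i s ⊆ A i
  hB_card : ∀ i s, (B i s).card = r2 + δ
  hB_disj : ∀ i s s', s ≠ s' → Disjoint (B i s) (B i s')
  hdim : finrank F C = k
  hloc : ∀ i s, finrank F (C.map (punctureTo F (B i s))) ≤ r2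
  hmid : ∀ i, finrank F (C.map (punctureTo F (A i))) ≤ r1
  hMR : ∀ E : Finset (Fin n), E.card = k + h1 →
    (∀ i s, (E ∩ B i s).card ≤ r2) → (∀ i, (E ∩ A i).card = r1) →
    finrank F (C.map (punctureTo F E)) = k ∧
      ∀ x ∈ C.map (punctureTo F E), x ≠ 0 → h1 + 1 ≤ hammingNorm x

namespace HDLMRCaux

variable {F : Type*} [Field F] {n : ℕ}

def restr (F : Type*) [Field F] {n : ℕ} {S T : Finset (Fin n)} (h : S ⊆ T) :
    (T → F) →ₗ[F] (S → F) :=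
  LinearMap.funLeft F F fun j => (⟨j.1, h j.2⟩ : T)

lemma restr_comp {S T : Finset (Fin n)} (h : S ⊆ T) :
    (restr F h).comp (punctureTo F T) = punctureTo F S := rfl

lemma map_restr (p : Submodule F (Fin n → F)) {S T : Finset (Fin n)} (h : S ⊆ T) :
    p.map (punctureTo F S) = (p.map (punctureTo F T)).map (restr F h) := by
  rw [← Submodule.map_comp, restr_comp]

lemma finrank_top_coords (S : Finset (Fin n)) :
    finrank F (⊤ : Submodule F (S → F)) = S.card := by
  rw [finrank_top, Module.finrank_fintype_fun_eq_card, Fintype.card_coe]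

lemma restr_surjective {S T : Finset (Fin n)} (h : S ⊆ T) :
    Function.Surjective (restr F h) :=
  LinearMap.funLeft_surjective_of_injective F F _ (by
    intro a b hab
    simp only [Subtype.mk.injEq] at hab
    exact Subtype.ext hab)

/-- Key lemma: any `r1`-subset of a middle group meeting each local group in at most
`r2` coordinates supports the full space after puncturing. -/
lemma key {k r1 r2 h1 h2 δ t1 t2 : ℕ} [DecidableEq F]
    (ht1 : 0 < t1)
    (X : IsHDLMRC F k r1 r2 h1 h2 δ t1 t2 n) (i : Fin t1)
    (S : Finset (Fin n)) (hS : S ⊆ X.A i) (hScard : S.card = r1)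
    (hSB : ∀ s, (S ∩ X.B i s).card ≤ r2) :
    X.C.map (punctureTo F S) = ⊤ := by
  classical
  -- choose r2-subsets of each local group
  have hT : ∀ j s, ∃ t ⊆ X.B j s, t.card = r2 :=
    fun j s => Finset.exists_subset_card_eq (by rw [X.hB_card]; omega)
  choose T hTsub hTcard using hT
  set Sm : Fin t1 → Finset (Fin n) :=
    fun j => if j = i then S else Finset.univ.biUnion (T j) with hSm
  have hSmA : ∀ j, Sm j ⊆ X.A j := by
    intro j
    by_cases hj : j = i
    · subst hj; simp only [hSm, if_pos rfl]; exact hS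
    · simp only [hSm, if_neg hj]
      exact Finset.biUnion_subset.mpr fun s _ => (hTsub j s).trans (X.hB_sub j s)
  have hSmcard : ∀ j, (Sm j).card = r1 := by
    intro j
    by_cases hj : j = i
    · subst hj; simp only [hSm, if_pos rfl]; exact hScard
    · simp only [hSm, if_neg hj]
      rw [Finset.card_biUnion (fun s _ s' _ hss' =>
        Finset.disjoint_of_subset_left (hTsub j s)
          (Finset.disjoint_of_subset_right (hTsub j s') (X.hB_disj j s s' hss')))]
      simp only [hTcard]
      rw [Finset.sum_const, Finset.card_univ, Fintype.card_fin, smul_eq_mul, X.hr1]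
  -- the set E
  set M : Finset (Fin n) := Finset.univ.biUnion Sm with hM
  set R : Finset (Fin n) := Finset.univ \ Finset.univ.biUnion X.A with hR
  set E : Finset (Fin n) := M ∪ R with hE
  have hMA : M ⊆ Finset.univ.biUnion X.A :=
    Finset.biUnion_subset.mpr fun j _ => (hSmA j).trans (Finset.subset_biUnion_of_mem X.A (Finset.mem_univ j))
  have hMR_disj : Disjoint M R :=
    Finset.disjoint_of_subset_left hMA (Finset.disjoint_sdiff)
  have hMint : ∀ j, M ∩ X.A j = Sm j := by
    intro j
    apply Finset.Subset.antisymm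
    · intro x hx
      rw [Finset.mem_inter, hM, Finset.mem_biUnion] at hx
      obtain ⟨⟨j', _, hj'⟩, hxa⟩ := hx
      by_cases hjj : j' = j
      · subst hjj; exact hj'
      · exact absurd (Finset.mem_inter.mpr ⟨hSmA j' hj', hxa⟩)
          (by rw [Finset.disjoint_iff_inter_eq_empty.mp (X.hA_disj j' j hjj)]; exact Finset.notMem_empty x)
    · intro x hx
      exact Finset.mem_inter.mpr ⟨Finset.mem_biUnion.mpr ⟨j, Finset.mem_univ j, hx⟩, hSmA j hx⟩
  have hRint : ∀ j, R ∩ X.A j = ∅ := by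
    intro j
    rw [Finset.eq_empty_iff_forall_notMem]
    intro x hx
    rw [Finset.mem_inter, hR, Finset.mem_sdiff] at hx
    exact hx.1.2 (Finset.mem_biUnion.mpr ⟨j, Finset.mem_univ j, hx.2⟩)
  have hEA : ∀ j, E ∩ X.A j = Sm j := by
    intro j
    rw [hE, Finset.union_inter_distrib_right, hRint, hMint, Finset.union_empty]
  have hEB : ∀ j s, E ∩ X.B j s = Sm j ∩ X.B j s := by
    intro j s
    calc E ∩ X.B j s = E ∩ (X.A j ∩ X.B j s) := by
          rw [Finset.inter_eq_right.mpr (X.hB_sub j s)]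
      _ = (E ∩ X.A j) ∩ X.B j s := by rw [Finset.inter_assoc]
      _ = Sm j ∩ X.B j s := by rw [hEA]
  -- cardinalities
  have hAcards : (Finset.univ.biUnion X.A).card = t1 * (r1 + h2 + t2 * δ) := by
    rw [Finset.card_biUnion (fun a _ b _ hab => X.hA_disj a b hab)]
    simp only [X.hA_card]
    rw [Finset.sum_const, Finset.card_univ, Fintype.card_fin, smul_eq_mul]
  have hRcard : R.card = h1 := by
    rw [hR, Finset.card_sdiff_of_subset (Finset.subset_univ _), Finset.card_univ, Fintype.card_fin,
      hAcards]
    have h1' : t1 * (r1 + h2 + t2 * δ) = t1 * r1 + t1 * (h2 + t2 * δ) := by ring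
    have h2' : n = t1 * r1 + h1 + t1 * (h2 + t2 * δ) := by rw [X.hn, X.hk]
    omega
  have hMcard : M.card = k := by
    rw [hM, Finset.card_biUnion (fun a _ b _ hab =>
      Finset.disjoint_of_subset_left (hSmA a)
        (Finset.disjoint_of_subset_right (hSmA b) (X.hA_disj a b hab)))]
    simp only [hSmcard]
    rw [Finset.sum_const, Finset.card_univ, Fintype.card_fin, smul_eq_mul, X.hk]
  have hEcard : E.card = k + h1 := by
    rw [hE, Finset.card_union_of_disjoint hMR_disj, hMcard, hRcard]
  -- hypotheses of hMR
  have hEBcard : ∀ j s, (E ∩ X.B j s).card ≤ r2 := by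
    intro j s
    rw [hEB]
    by_cases hj : j = i
    · subst hj; simp only [hSm, if_pos rfl]; exact hSB s
    · simp only [hSm, if_neg hj]
      have : Finset.univ.biUnion (T j) ∩ X.B j s = T j s := by
        apply Finset.Subset.antisymm
        · intro x hx
          rw [Finset.mem_inter, Finset.mem_biUnion] at hx
          obtain ⟨⟨s', _, hs'⟩, hxb⟩ := hx
          by_cases hss : s' = s
          · subst hss; exact hs'
          · exact absurd (Finset.mem_inter.mpr ⟨hTsub j s' hs', hxb⟩)
              (by rw [Finset.disjoint_iff_inter_eq_empty.mp (X.hB_disj j s' s hss)]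
                  exact Finset.notMem_empty x)
        · intro x hx
          exact Finset.mem_inter.mpr ⟨Finset.mem_biUnion.mpr ⟨s, Finset.mem_univ s, hx⟩, hTsub j s hx⟩
      rw [this, hTcard]
  have hEAcard : ∀ j, (E ∩ X.A j).card = r1 := fun j => by rw [hEA, hSmcard]
  obtain ⟨hdimE, hdistE⟩ := X.hMR E hEcard hEBcard hEAcard
  -- choose K with S ⊆ K ⊆ E, |K| = k
  have hr1k : r1 ≤ k := by
    rw [X.hk]; exact Nat.le_mul_of_pos_left r1 ht1
  have hSE : S ⊆ E := by
    intro x hx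
    refine hE ▸ Finset.mem_union_left _ (Finset.mem_biUnion.mpr ⟨i, Finset.mem_univ i, ?_⟩)
    simp only [hSm, if_pos rfl]; exact hx
  obtain ⟨K, hSK, hKE, hKcard⟩ := Finset.exists_subsuperset_card_eq (n := k - r1 + S.card) hSE
    (by omega) (by rw [hScard, hEcard]; omega)
  rw [hScard] at hKcard
  have hKcard' : K.card = k := by rw [hKcard]; omega
  -- the restriction from E to K is injective on the punctured code
  set CE := X.C.map (punctureTo F E) with hCE
  set g : CE →ₗ[F] (K → F) := (restr F hKE).comp CE.subtype with hg
  have hginj : Function.Injective g := by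
    rw [← LinearMap.ker_eq_bot, Submodule.eq_bot_iff]
    rintro ⟨x, hx⟩ hker
    have hx0 : x = 0 := by
      by_contra hx0
      have hw := hdistE x hx hx0
      -- support of x has ≤ h1 elements
      have hnorm : hammingNorm x = (Finset.univ.filter fun j : E => x j ≠ 0).card := rfl
      have hsub : (Finset.univ.filter fun j : E => x j ≠ 0).card ≤ (E \ K).card := by
        apply Finset.card_le_card_of_injOn (fun j => j.1)
        · intro j hj
          rw [Finset.mem_coe, Finset.mem_filter] at hj
          rw [Finset.mem_coe, Finset.mem_sdiff]
          refine ⟨j.2, fun hjK => hj.2 ?_⟩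
          have : g ⟨x, hx⟩ ⟨j.1, hjK⟩ = 0 := by rw [hker]; rfl
          simpa [hg, restr, punctureTo, LinearMap.funLeft] using this
        · intro a _ b _ hab
          exact Subtype.ext hab
      rw [Finset.card_sdiff_of_subset hKE, hEcard, hKcard'] at hsub
      rw [hnorm] at hw
      omega
    exact Subtype.ext hx0
  -- K supports the full space
  have hCK : X.C.map (punctureTo F K) = ⊤ := by
    have hrange : LinearMap.range g = X.C.map (punctureTo F K) := by
      rw [hg, LinearMap.range_comp, Submodule.range_subtype, ← map_restr]
    apply Submodule.eq_top_of_finrank_eq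
    rw [← hrange, g.finrank_range_of_inj hginj, hCE, hdimE,
      Module.finrank_fintype_fun_eq_card, Fintype.card_coe, hKcard']
  -- hence so does S
  rw [map_restr X.C hSK, hCK, Submodule.map_top, LinearMap.range_eq_top]
  exact restr_surjective hSK


end HDLMRCaux

open HDLMRCaux in
/-- **Middle codes of an HDL-MRC are data-local MRCs.** For every middle group `A i` of a
`[k, r₁, r₂, h₁, h₂, δ]` HDL-MRC, the punctured code `C|_{A i}` is an `[r₁, r₂, h₂, δ]`
data-local maximally recoverable code: it has dimension `r₁`, and deleting any `δ`
coordinates from each of its local groups `B i s` yields an `[r₁+h₂, r₁, h₂+1]` MDS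
code. -/
theorem hdlmrc_middle_code_is_data_local_mrc
    (F : Type*) [Field F] [DecidableEq F]
    (k r1 r2 h1 h2 δ t1 t2 n : ℕ)
    (hk : 0 < k) (hr2 : 0 < r2) (hδ : 0 < δ) (ht1 : 0 < t1) (ht2 : 0 < t2)
    (X : IsHDLMRC F k r1 r2 h1 h2 δ t1 t2 n) (i : Fin t1) :
    finrank F (X.C.map (punctureTo F (X.A i))) = r1 ∧
      ∀ D : Finset (Fin n), D ⊆ X.A i →
        (∀ s, (D ∩ X.B i s).card = δ) → (∀ j ∈ D, ∃ s, j ∈ X.B i s) →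
        finrank F (X.C.map (punctureTo F (X.A i \ D))) = r1 ∧
          ∀ x ∈ X.C.map (punctureTo F (X.A i \ D)), x ≠ 0 →
            h2 + 1 ≤ hammingNorm x := by
  classical
  constructor
  · -- dimension of the middle code
    refine le_antisymm (X.hmid i) ?_
    have hT : ∀ s, ∃ t ⊆ X.B i s, t.card = r2 :=
      fun s => Finset.exists_subset_card_eq (by rw [X.hB_card]; omega)
    choose T hTsub hTcard using hT
    set S0 : Finset (Fin n) := Finset.univ.biUnion T with hS0
    have hint : ∀ s, S0 ∩ X.B i s = T s := by
      intro s
      apply Finset.Subset.antisymm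
      · intro y hy
        rw [Finset.mem_inter, hS0, Finset.mem_biUnion] at hy
        obtain ⟨⟨s', _, hs'⟩, hyb⟩ := hy
        by_cases hss : s' = s
        · subst hss; exact hs'
        · exact absurd (Finset.mem_inter.mpr ⟨hTsub s' hs', hyb⟩)
            (by rw [Finset.disjoint_iff_inter_eq_empty.mp (X.hB_disj i s' s hss)]
                exact Finset.notMem_empty y)
      · intro y hy
        exact Finset.mem_inter.mpr
          ⟨Finset.mem_biUnion.mpr ⟨s, Finset.mem_univ s, hy⟩, hTsub s hy⟩
    have hS0A : S0 ⊆ X.A i :=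
      Finset.biUnion_subset.mpr fun s _ => (hTsub s).trans (X.hB_sub i s)
    have hS0card : S0.card = r1 := by
      rw [hS0, Finset.card_biUnion (fun a _ b _ hab =>
        Finset.disjoint_of_subset_left (hTsub a)
          (Finset.disjoint_of_subset_right (hTsub b) (X.hB_disj i a b hab)))]
      simp only [hTcard]
      rw [Finset.sum_const, Finset.card_univ, Fintype.card_fin, smul_eq_mul, X.hr1]
    have htop := key ht1 X i S0 hS0A hS0card (fun s => by rw [hint s, hTcard s])
    have hle := Submodule.finrank_map_le (restr F hS0A) (X.C.map (punctureTo F (X.A i)))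
    rw [← map_restr, htop, finrank_top_coords, hS0card] at hle
    exact hle
  · -- the deleted middle code
    intro D hD hDB hDloc
    -- card of D
    have hDeq : D = Finset.univ.biUnion (fun s => D ∩ X.B i s) := by
      ext y
      rw [Finset.mem_biUnion]
      constructor
      · intro hy
        obtain ⟨s, hs⟩ := hDloc y hy
        exact ⟨s, Finset.mem_univ s, Finset.mem_inter.mpr ⟨hy, hs⟩⟩
      · rintro ⟨s, -, hs⟩
        exact (Finset.mem_inter.mp hs).1
    have hDcard : D.card = t2 * δ := by
      conv_lhs => rw [hDeq]
      rw [Finset.card_biUnion (fun a _ b _ hab =>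
        Finset.disjoint_of_subset_left (Finset.inter_subset_right)
          (Finset.disjoint_of_subset_right (Finset.inter_subset_right)
            (X.hB_disj i a b hab)))]
      simp only [hDB]
      rw [Finset.sum_const, Finset.card_univ, Fintype.card_fin, smul_eq_mul]
    set G : Finset (Fin n) := X.A i \ D with hG
    have hGA : G ⊆ X.A i := Finset.sdiff_subset
    have hGcard : G.card = r1 + h2 := by
      rw [hG, Finset.card_sdiff_of_subset hD, X.hA_card, hDcard]
      omega
    have hGB : ∀ s, (G ∩ X.B i s).card = r2 := by
      intro s
      have heq : G ∩ X.B i s = X.B i s \ D := by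
        ext y
        rw [hG, Finset.mem_inter, Finset.mem_sdiff, Finset.mem_sdiff]
        constructor
        · rintro ⟨⟨-, hyD⟩, hyB⟩; exact ⟨hyB, hyD⟩
        · rintro ⟨hyB, hyD⟩; exact ⟨⟨X.hB_sub i s hyB, hyD⟩, hyB⟩
      rw [heq]
      have h1 := Finset.card_inter_add_card_sdiff (X.B i s) D
      rw [Finset.inter_comm] at h1
      rw [hDB s, X.hB_card] at h1
      omega
    -- dimension of the deleted middle code
    have hdimG_le : finrank F (X.C.map (punctureTo F G)) ≤ r1 := by
      have hle := Submodule.finrank_map_le (restr F hGA) (X.C.map (punctureTo F (X.A i)))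
      rw [← map_restr] at hle
      exact hle.trans (X.hmid i)
    have hgoodS : ∀ S : Finset (Fin n), S ⊆ G → S.card = r1 →
        X.C.map (punctureTo F S) = ⊤ := by
      intro S hSG hScard
      refine key ht1 X i S (hSG.trans hGA) hScard (fun s => ?_)
      calc (S ∩ X.B i s).card ≤ (G ∩ X.B i s).card :=
            Finset.card_le_card (Finset.inter_subset_inter hSG (le_refl _))
        _ = r2 := hGB s
    have hdimG : finrank F (X.C.map (punctureTo F G)) = r1 := by
      refine le_antisymm hdimG_le ?_
      obtain ⟨S, hSG, hScard⟩ : ∃ S ⊆ G, S.card = r1 :=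
        Finset.exists_subset_card_eq (by omega)
      have htop := hgoodS S hSG hScard
      have hle := Submodule.finrank_map_le (restr F hSG) (X.C.map (punctureTo F G))
      rw [← map_restr, htop, finrank_top_coords, hScard] at hle
      exact hle
    refine ⟨hdimG, ?_⟩
    -- distance of the deleted middle code
    intro x hx hx0
    by_contra hcon
    push_neg at hcon
    have hwx : hammingNorm x ≤ h2 := by omega
    set supp : Finset (Fin n) :=
      (Finset.univ.filter fun j : G => x j ≠ 0).map ⟨Subtype.val, Subtype.val_injective⟩
      with hsupp
    have hsuppG : supp ⊆ G := by
      intro y hy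
      rw [hsupp, Finset.mem_map] at hy
      obtain ⟨a, -, rfl⟩ := hy
      exact a.2
    have hsuppcard : supp.card ≤ h2 := by
      rw [hsupp, Finset.card_map]
      exact le_trans (le_of_eq rfl) hwx
    obtain ⟨S, hSGs, hScard⟩ : ∃ S ⊆ G \ supp, S.card = r1 :=
      Finset.exists_subset_card_eq
        (by rw [Finset.card_sdiff_of_subset hsuppG, hGcard]; omega)
    have hSG : S ⊆ G := hSGs.trans Finset.sdiff_subset
    have htop := hgoodS S hSG hScard
    set CG := X.C.map (punctureTo F G) with hCG
    set g : CG →ₗ[F] (S → F) := (restr F hSG).comp CG.subtype with hg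
    have hrange : LinearMap.range g = X.C.map (punctureTo F S) := by
      rw [hg, LinearMap.range_comp, Submodule.range_subtype, ← map_restr]
    have hker : LinearMap.ker g = ⊥ := by
      have hrn := g.finrank_range_add_finrank_ker
      rw [hrange, htop, finrank_top_coords, hScard, hdimG] at hrn
      exact Submodule.finrank_eq_zero.mp (by omega)
    have hxker : (⟨x, hx⟩ : CG) ∈ LinearMap.ker g := by
      rw [LinearMap.mem_ker]
      funext j
      have hjS : j.1 ∈ S := j.2
      have hjns : j.1 ∉ supp := (Finset.mem_sdiff.mp (hSGs hjS)).2
      have hjG : j.1 ∈ G := hSG hjS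
      show x ⟨j.1, hSG j.2⟩ = 0
      by_contra hxne
      exact hjns (by
        rw [hsupp, Finset.mem_map]
        exact ⟨⟨j.1, hSG j.2⟩, Finset.mem_filter.mpr ⟨Finset.mem_univ _, hxne⟩, rfl⟩)
    rw [hker, Submodule.mem_bot] at hxker
    exact hx0 (congrArg Subtype.val hxker)
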